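/- Let G be any group and p a prime. Then G_{(p+1)} ⊆ G^{(3)}, i.e., the (p+1)-st term of the p-Zassenhaus filtration is contained in the third term of the descending p-central series. -/

import Mathlib

open scoped commutatorElement

/-- One step of the descending `p`-central series: `H ↦ H^p [H, G]`. -/
def pCentralStep (p : ℕ) {G : Type*} [Group G] (H : Subgroup G) : Subgroup G :=
  Subgroup.closure ({g | ∃ x ∈ H, g = x ^ p} ∪ {g | ∃ x ∈ H, ∃ y : G, g = ⁅x, y⁆})

/-- The descending `p`-central series `G^(1) = G`, `G^(i+1) = (G^(i))^p [G^(i), G]`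
(junk value `⊤` at `0`). -/
def pCentralSeries (p : ℕ) (G : Type*) [Group G] : ℕ → Subgroup G
  | 0 => ⊤
  | 1 => ⊤
  | (n + 2) => pCentralStep p (pCentralSeries p G (n + 1))

/-- Fuel-based recursion computing the `p`-Zassenhaus filtration
`G_(1) = G`, `G_(n) = (G_(⌈n/p⌉))^p · ∏_{i+j=n, i,j ≥ 1} [G_(i), G_(j)]`;
for `p ≥ 2`, fuel `n` suffices to compute `G_(n)`. -/
def zassAux (p : ℕ) (G : Type*) [Group G] : ℕ → ℕ → Subgroup G
  | 0, _ => ⊤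
  | (fuel + 1), n =>
    if n ≤ 1 then ⊤
    else
      Subgroup.closure
        ({g | ∃ x ∈ zassAux p G fuel ((n + p - 1) / p), g = x ^ p} ∪
         {g | ∃ i j : ℕ, 1 ≤ i ∧ 1 ≤ j ∧ i + j = n ∧
              ∃ x ∈ zassAux p G fuel i, ∃ y ∈ zassAux p G fuel j, g = ⁅x, y⁆})

/-- The `p`-Zassenhaus filtration `G_(n)` of `G` (for `n ≥ 1`; junk value `⊤` at `0`). -/
def zassenhaus (p : ℕ) (G : Type*) [Group G] (n : ℕ) : Subgroup G := zassAux p G n n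

/-- Any `zassAux` term with index `≥ 2` (and positive fuel) sits inside `G^(2)`. -/
lemma zassAux_le_two (p : ℕ) (G : Type*) [Group G] (fuel n : ℕ) (hn : 2 ≤ n) :
    zassAux p G (fuel + 1) n ≤ pCentralSeries p G 2 := by
  show zassAux p G (fuel + 1) n ≤ pCentralStep p (⊤ : Subgroup G)
  rw [zassAux, if_neg (by omega)]
  apply Subgroup.closure_le _ |>.2
  rintro g (⟨x, _, rfl⟩ | ⟨i, j, _, _, _, x, _, y, _, rfl⟩) <;>
    apply Subgroup.subset_closure
  · exact Or.inl ⟨x, trivial, rfl⟩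
  · exact Or.inr ⟨x, trivial, y, rfl⟩

/-- For any group `G` and prime `p`, the `(p+1)`-st term of the
`p`-Zassenhaus filtration is contained in the third term of the descending `p`-central
series: `G_(p+1) ⊆ G^(3)`. -/
theorem stmt14 (G : Type*) [Group G] (p : ℕ) (hp : p.Prime) :
    zassenhaus p G (p + 1) ≤ pCentralSeries p G 3 := by
  have hp2 : 2 ≤ p := hp.two_le
  obtain ⟨q, rfl⟩ : ∃ q, p = q + 1 := ⟨p - 1, by omega⟩
  set p := q + 1
  show zassAux p G (p + 1) (p + 1) ≤ pCentralStep p (pCentralSeries p G 2)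
  rw [zassAux, if_neg (by omega)]
  have hdiv : (p + 1 + p - 1) / p = 2 := by
    have : p + 1 + p - 1 = 2 * p := by omega
    rw [this, Nat.mul_div_cancel _ (by omega)]
  apply Subgroup.closure_le _ |>.2
  rintro g (⟨x, hx, rfl⟩ | ⟨i, j, hi, hj, hij, x, hx, y, hy, rfl⟩)
  · rw [hdiv] at hx
    have hx2 : x ∈ pCentralSeries p G 2 := zassAux_le_two p G q 2 le_rfl hx
    exact Subgroup.subset_closure (Or.inl ⟨x, hx2, rfl⟩)
  · rcases le_or_gt 2 i with h2 | h2
    · have hx2 : x ∈ pCentralSeries p G 2 := zassAux_le_two p G q i h2 hx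
      exact Subgroup.subset_closure (Or.inr ⟨x, hx2, y, rfl⟩)
    · have hj2 : 2 ≤ j := by omega
      have hy2 : y ∈ pCentralSeries p G 2 := zassAux_le_two p G q j hj2 hy
      have : ⁅y, x⁆ ∈ pCentralStep p (pCentralSeries p G 2) :=
        Subgroup.subset_closure (Or.inr ⟨y, hy2, x, rfl⟩)
      have := inv_mem this
      rwa [commutatorElement_inv] at this
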